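/- For all vectors β and u in ℝ⁷, the seven-dimensional cross product satisfies β × (β × u) = −‖β‖² u + ⟨β, u⟩ β. -/

import Mathlib

open scoped RealInnerProductSpace

noncomputable section

/-- `V7` is ℝ⁷ with its Euclidean inner product. -/
abbrev V7 : Type := EuclideanSpace ℝ (Fin 7)

/-- Evaluation of the wedge product `eⁱ ∧ eʲ ∧ eᵏ` of dual basis 1-forms on three vectors. -/
def w3 (i j k : Fin 7) (u v w : V7) : ℝ :=
  Matrix.det !![u i, u j, u k; v i, v j, v k; w i, w j, w k]

/-- Evaluation of the wedge product `eⁱ ∧ eʲ ∧ eᵏ ∧ eˡ` on four vectors. -/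
def w4 (i j k l : Fin 7) (u v w z : V7) : ℝ :=
  Matrix.det !![u i, u j, u k, u l; v i, v j, v k, v l;
                w i, w j, w k, w l; z i, z j, z k, z l]

/-- The standard G₂ 3-form φ₀ = e¹²³+e¹⁴⁵+e¹⁶⁷+e²⁴⁶−e²⁵⁷−e³⁴⁷−e³⁵⁶ (0-indexed). -/
def phi0 (u v w : V7) : ℝ :=
  w3 0 1 2 u v w + w3 0 3 4 u v w + w3 0 5 6 u v w + w3 1 3 5 u v w
    - w3 1 4 6 u v w - w3 2 3 6 u v w - w3 2 4 5 u v w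

/-- The 4-form ψ₀ = ∗φ₀ = e⁴⁵⁶⁷+e²³⁶⁷+e²³⁴⁵+e¹³⁵⁷−e¹³⁴⁶−e¹²⁵⁶−e¹²⁴⁷ (0-indexed). -/
def psi0 (u v w z : V7) : ℝ :=
  w4 3 4 5 6 u v w z + w4 1 2 5 6 u v w z + w4 1 2 3 4 u v w z + w4 0 2 4 6 u v w z
    - w4 0 2 3 5 u v w z - w4 0 1 4 5 u v w z - w4 0 1 3 6 u v w z

/-- For all vectors β, u in ℝ⁷, the seven-dimensional cross product (the unique bilinear
operation with ⟨u×v, w⟩ = φ₀(u,v,w)) satisfies β × (β × u) = −‖β‖² u + ⟨β, u⟩ β. -/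
theorem cross_cross_eq (cross : V7 → V7 → V7)
    (hcross : ∀ u v w : V7, ⟪cross u v, w⟫ = phi0 u v w)
    (β u : V7) :
    cross β (cross β u) = (-(‖β‖ ^ 2) : ℝ) • u + (⟪β, u⟫ : ℝ) • β := by
  have hcomp : ∀ v w : V7, ∀ i : Fin 7, cross v w i = phi0 v w (EuclideanSpace.single i 1) := by
    intro v w i; rw [← hcross]; simp [EuclideanSpace.inner_single_right]
  have hp0 : ∀ v w : V7, phi0 v w (EuclideanSpace.single 0 1)
      = (v 1 * w 2 - v 2 * w 1) + (v 3 * w 4 - v 4 * w 3) + (v 5 * w 6 - v 6 * w 5) := by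
    intro v w; simp [phi0, w3, Matrix.det_fin_three, EuclideanSpace.single_apply]; try ring
  have hp1 : ∀ v w : V7, phi0 v w (EuclideanSpace.single 1 1)
      = -(v 0 * w 2 - v 2 * w 0) + (v 3 * w 5 - v 5 * w 3) - (v 4 * w 6 - v 6 * w 4) := by
    intro v w; simp [phi0, w3, Matrix.det_fin_three, EuclideanSpace.single_apply]; try ring
  have hp2 : ∀ v w : V7, phi0 v w (EuclideanSpace.single 2 1)
      = (v 0 * w 1 - v 1 * w 0) - (v 3 * w 6 - v 6 * w 3) - (v 4 * w 5 - v 5 * w 4) := by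
    intro v w; simp [phi0, w3, Matrix.det_fin_three, EuclideanSpace.single_apply]; try ring
  have hp3 : ∀ v w : V7, phi0 v w (EuclideanSpace.single 3 1)
      = -(v 0 * w 4 - v 4 * w 0) - (v 1 * w 5 - v 5 * w 1) + (v 2 * w 6 - v 6 * w 2) := by
    intro v w; simp [phi0, w3, Matrix.det_fin_three, EuclideanSpace.single_apply]; try ring
  have hp4 : ∀ v w : V7, phi0 v w (EuclideanSpace.single 4 1)
      = (v 0 * w 3 - v 3 * w 0) + (v 1 * w 6 - v 6 * w 1) + (v 2 * w 5 - v 5 * w 2) := by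
    intro v w; simp [phi0, w3, Matrix.det_fin_three, EuclideanSpace.single_apply]; try ring
  have hp5 : ∀ v w : V7, phi0 v w (EuclideanSpace.single 5 1)
      = -(v 0 * w 6 - v 6 * w 0) + (v 1 * w 3 - v 3 * w 1) - (v 2 * w 4 - v 4 * w 2) := by
    intro v w; simp [phi0, w3, Matrix.det_fin_three, EuclideanSpace.single_apply]; try ring
  have hp6 : ∀ v w : V7, phi0 v w (EuclideanSpace.single 6 1)
      = (v 0 * w 5 - v 5 * w 0) - (v 1 * w 4 - v 4 * w 1) - (v 2 * w 3 - v 3 * w 2) := by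
    intro v w; simp [phi0, w3, Matrix.det_fin_three, EuclideanSpace.single_apply]; try ring
  have hnorm : ‖β‖ ^ 2 = ∑ i, β i * β i := by
    rw [← real_inner_self_eq_norm_sq]
    simp only [PiLp.inner_apply, RCLike.inner_apply, conj_trivial]
  have hinner : (⟪β, u⟫ : ℝ) = ∑ i, β i * u i := by
    simp [PiLp.inner_apply, RCLike.inner_apply, conj_trivial, mul_comm]
  have h0 := (hcomp β u 0).trans (hp0 β u)
  have h1 := (hcomp β u 1).trans (hp1 β u)
  have h2 := (hcomp β u 2).trans (hp2 β u)
  have h3 := (hcomp β u 3).trans (hp3 β u)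
  have h4 := (hcomp β u 4).trans (hp4 β u)
  have h5 := (hcomp β u 5).trans (hp5 β u)
  have h6 := (hcomp β u 6).trans (hp6 β u)
  have key : ∀ i : Fin 7, cross β (cross β u) i
      = ((-(‖β‖ ^ 2) : ℝ) • u + (⟪β, u⟫ : ℝ) • β) i := by
    have g0 := (hcomp β (cross β u) 0).trans (hp0 β (cross β u))
    have g1 := (hcomp β (cross β u) 1).trans (hp1 β (cross β u))
    have g2 := (hcomp β (cross β u) 2).trans (hp2 β (cross β u))
    have g3 := (hcomp β (cross β u) 3).trans (hp3 β (cross β u))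
    have g4 := (hcomp β (cross β u) 4).trans (hp4 β (cross β u))
    have g5 := (hcomp β (cross β u) 5).trans (hp5 β (cross β u))
    have g6 := (hcomp β (cross β u) 6).trans (hp6 β (cross β u))
    simp only [h0, h1, h2, h3, h4, h5, h6] at g0 g1 g2 g3 g4 g5 g6
    have key0 : cross β (cross β u) (0 : Fin 7)
        = ((-(‖β‖ ^ 2) : ℝ) • u + (⟪β, u⟫ : ℝ) • β) (0 : Fin 7) := by
      rw [g0]; simp only [PiLp.add_apply, PiLp.smul_apply, smul_eq_mul, hnorm, hinner,
        Fin.sum_univ_seven]; ring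
    have key1 : cross β (cross β u) (1 : Fin 7)
        = ((-(‖β‖ ^ 2) : ℝ) • u + (⟪β, u⟫ : ℝ) • β) (1 : Fin 7) := by
      rw [g1]; simp only [PiLp.add_apply, PiLp.smul_apply, smul_eq_mul, hnorm, hinner,
        Fin.sum_univ_seven]; ring
    have key2 : cross β (cross β u) (2 : Fin 7)
        = ((-(‖β‖ ^ 2) : ℝ) • u + (⟪β, u⟫ : ℝ) • β) (2 : Fin 7) := by
      rw [g2]; simp only [PiLp.add_apply, PiLp.smul_apply, smul_eq_mul, hnorm, hinner,
        Fin.sum_univ_seven]; ring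
    have key3 : cross β (cross β u) (3 : Fin 7)
        = ((-(‖β‖ ^ 2) : ℝ) • u + (⟪β, u⟫ : ℝ) • β) (3 : Fin 7) := by
      rw [g3]; simp only [PiLp.add_apply, PiLp.smul_apply, smul_eq_mul, hnorm, hinner,
        Fin.sum_univ_seven]; ring
    have key4 : cross β (cross β u) (4 : Fin 7)
        = ((-(‖β‖ ^ 2) : ℝ) • u + (⟪β, u⟫ : ℝ) • β) (4 : Fin 7) := by
      rw [g4]; simp only [PiLp.add_apply, PiLp.smul_apply, smul_eq_mul, hnorm, hinner,
        Fin.sum_univ_seven]; ring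
    have key5 : cross β (cross β u) (5 : Fin 7)
        = ((-(‖β‖ ^ 2) : ℝ) • u + (⟪β, u⟫ : ℝ) • β) (5 : Fin 7) := by
      rw [g5]; simp only [PiLp.add_apply, PiLp.smul_apply, smul_eq_mul, hnorm, hinner,
        Fin.sum_univ_seven]; ring
    have key6 : cross β (cross β u) (6 : Fin 7)
        = ((-(‖β‖ ^ 2) : ℝ) • u + (⟪β, u⟫ : ℝ) • β) (6 : Fin 7) := by
      rw [g6]; simp only [PiLp.add_apply, PiLp.smul_apply, smul_eq_mul, hnorm, hinner,
        Fin.sum_univ_seven]; ring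
    intro i
    fin_cases i
    · exact key0
    · exact key1
    · exact key2
    · exact key3
    · exact key4
    · exact key5
    · exact key6
  exact PiLp.ext key
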